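/- Let n, m ≥ 1, let Φ ∈ ℝ^{m×m} be a fixed matrix, and let W be a random m×m real matrix with i.i.d. standard Gaussian N(0,1) entries. Let W̄ be the matrix with entries W̄_{μα} = (1/m)·Σ_{ν=1}^m W_{να}, set W̃ = W − W̄, and let A = I_m + (1/√(nm))·W̃. Then the entrywise expectation of Aᵀ Φ A satisfies E[Aᵀ Φ A] = Φ + (1/n)·( (1/m)·Tr(Φ) − M(Φ) )·I_m, where M(Φ) = (1/m²)·Σ_{α,β=1}^m Φ_{αβ}. -/

import Mathlib

open MeasureTheory ProbabilityTheory Matrix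

/-- The column-centered matrix `W̃ = W − W̄`, where `W̄` replaces each entry
by the empirical average of its column. -/
noncomputable def centered (m : ℕ) (W : Fin m × Fin m → ℝ) :
    Matrix (Fin m) (Fin m) ℝ :=
  Matrix.of fun i j => W (i, j) - (1 / (m : ℝ)) * ∑ ν : Fin m, W (ν, j)

section Aux

open Real
open scoped ENNReal NNReal

-- integral against gaussian as weighted Lebesgue integral
lemma gauss_integral_eq (g : ℝ → ℝ) :
    ∫ y, g y ∂(gaussianReal 0 1) = ∫ y, gaussianPDFReal 0 1 y * g y := by
  rw [gaussianReal_of_var_ne_zero _ one_ne_zero]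
  have hpdf : gaussianPDF 0 1 = fun x => ((gaussianPDFReal 0 1 x).toNNReal : ℝ≥0∞) := rfl
  rw [hpdf, integral_withDensity_eq_integral_smul
    (measurable_gaussianPDFReal 0 1).real_toNNReal]
  congr 1
  ext y
  rw [NNReal.smul_def, smul_eq_mul, Real.coe_toNNReal _ (gaussianPDFReal_nonneg 0 1 y)]

lemma gauss_integrable_iff (g : ℝ → ℝ) :
    Integrable g (gaussianReal 0 1) ↔ Integrable (fun y => gaussianPDFReal 0 1 y * g y) := by
  rw [gaussianReal_of_var_ne_zero _ one_ne_zero]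
  have hpdf : gaussianPDF 0 1 = fun x => ((gaussianPDFReal 0 1 x).toNNReal : ℝ≥0∞) := rfl
  rw [hpdf, integrable_withDensity_iff_integrable_smul
    (measurable_gaussianPDFReal 0 1).real_toNNReal]
  constructor <;> intro h <;> refine h.congr (Filter.Eventually.of_forall fun y => ?_) <;>
    simp only [NNReal.smul_def, smul_eq_mul, Real.coe_toNNReal _ (gaussianPDFReal_nonneg 0 1 y)]

lemma pdf_eq (y : ℝ) : gaussianPDFReal 0 1 y = (Real.sqrt (2 * π))⁻¹ * Real.exp (-(1/2) * y ^ 2) := by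
  simp only [gaussianPDFReal, NNReal.coe_one, mul_one, sub_zero]
  ring_nf

lemma integrable_pdf_mul_pow (k : ℕ) :
    Integrable (fun y : ℝ => gaussianPDFReal 0 1 y * y ^ k) := by
  have h : Integrable (fun y : ℝ => y ^ (k : ℝ) * Real.exp (-(1/2) * y ^ 2)) :=
    integrable_rpow_mul_exp_neg_mul_sq (by norm_num)
      (lt_of_lt_of_le neg_one_lt_zero (Nat.cast_nonneg k))
  refine (h.const_mul ((Real.sqrt (2 * π))⁻¹)).congr
    (Filter.Eventually.of_forall fun y => ?_)
  show (Real.sqrt (2 * π))⁻¹ * (y ^ (k:ℝ) * Real.exp (-(1/2) * y ^ 2))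
      = gaussianPDFReal 0 1 y * y ^ k
  rw [pdf_eq, Real.rpow_natCast]
  ring

lemma gauss_integrable_pow (k : ℕ) :
    Integrable (fun y : ℝ => y ^ k) (gaussianReal 0 1) := by
  rw [gauss_integrable_iff]
  exact integrable_pdf_mul_pow k

lemma gauss_mean : ∫ y, y ∂(gaussianReal 0 1) = 0 := by
  rw [gauss_integral_eq]
  have hodd : ∀ y : ℝ, gaussianPDFReal 0 1 (-y) * (-y) = -(gaussianPDFReal 0 1 y * y) := by
    intro y
    rw [pdf_eq, pdf_eq, neg_sq]
    ring
  have h := integral_neg_eq_self (fun y : ℝ => gaussianPDFReal 0 1 y * y) volume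
  simp only [hodd, integral_neg] at h
  linarith

lemma gauss_sq : ∫ y, y * y ∂(gaussianReal 0 1) = 1 := by
  rw [gauss_integral_eq]
  have h1 : (fun y : ℝ => gaussianPDFReal 0 1 y * (y * y))
      = fun y : ℝ => (Real.sqrt (2 * π))⁻¹ *
          ((fun t : ℝ => t ^ (2 : ℝ) * Real.exp (-(1/2) * t ^ (2:ℝ))) |y|) := by
    ext y
    show gaussianPDFReal 0 1 y * (y * y)
        = (Real.sqrt (2 * π))⁻¹ * (|y| ^ (2 : ℝ) * Real.exp (-(1/2) * |y| ^ (2:ℝ)))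
    rw [pdf_eq, Real.rpow_two, sq_abs]
    ring
  rw [h1, integral_const_mul,
    integral_comp_abs (f := fun t : ℝ => t ^ (2 : ℝ) * Real.exp (-(1/2) * t ^ (2:ℝ)))]
  rw [integral_rpow_mul_exp_neg_mul_rpow (by norm_num) (by norm_num) (by norm_num)]
  have hG : Real.Gamma ((2 + 1) / 2) = Real.sqrt π / 2 := by
    have h32 : ((2:ℝ) + 1) / 2 = 1/2 + 1 := by norm_num
    rw [h32, Real.Gamma_add_one (by norm_num), Real.Gamma_one_half_eq]
    ring
  have hb : ((1:ℝ)/2) ^ (-((2:ℝ) + 1) / 2) = Real.sqrt 2 ^ 3 := by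
    have : ((1:ℝ)/2) = 2⁻¹ := by norm_num
    rw [this, Real.inv_rpow (by norm_num), ← Real.rpow_neg (by norm_num)]
    rw [Real.sqrt_eq_rpow, ← Real.rpow_natCast ((2:ℝ) ^ ((1:ℝ)/2)) 3,
      ← Real.rpow_mul (by norm_num)]
    norm_num
  rw [hG, hb]
  have h2 : Real.sqrt 2 ^ 2 = 2 := Real.sq_sqrt (by norm_num)
  have hs2 : (0:ℝ) < Real.sqrt 2 := Real.sqrt_pos.mpr (by norm_num)
  have hsp : (0:ℝ) < Real.sqrt π := Real.sqrt_pos.mpr Real.pi_pos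
  have hmul : Real.sqrt (2 * π) = Real.sqrt 2 * Real.sqrt π := Real.sqrt_mul (by norm_num) π
  have h3 : Real.sqrt 2 ^ 3 = 2 * Real.sqrt 2 := by
    rw [pow_succ, h2]
  rw [hmul, h3]
  field_simp

lemma integral_pi_eval {ι : Type*} [Fintype ι] [DecidableEq ι] (p : ι) :
    ∫ x : ι → ℝ, x p ∂(Measure.pi fun _ : ι => gaussianReal 0 1) = 0 := by
  letI : MeasureSpace ℝ := ⟨gaussianReal 0 1⟩
  haveI : SigmaFinite (volume : Measure ℝ) := inferInstanceAs (SigmaFinite (gaussianReal 0 1))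
  have h := integral_fintype_prod_eq_prod (𝕜 := ℝ) (fun i (y : ℝ) => if i = p then y else 1)
    (μ := fun _ => gaussianReal 0 1)
  have hrep : (fun x : ι → ℝ => x p)
      = fun x : ι → ℝ => ∏ i, (fun i (y : ℝ) => if i = p then y else 1) i (x i) := by
    funext x
    simp [Finset.prod_ite_eq']
  calc (∫ x : ι → ℝ, x p ∂(Measure.pi fun _ : ι => gaussianReal 0 1))
      = ∏ i, ∫ y : ℝ, (if i = p then y else 1) ∂(gaussianReal 0 1) := by
        rw [hrep]; exact h
    _ = 0 := Finset.prod_eq_zero (Finset.mem_univ p) (by simp [gauss_mean])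

lemma gauss_integrable_factor (P Q : Prop) [Decidable P] [Decidable Q] :
    Integrable (fun y : ℝ => (if P then y else 1) * (if Q then y else 1))
      (gaussianReal 0 1) := by
  by_cases hP : P <;> by_cases hQ : Q <;>
    simp only [if_pos, if_neg, hP, hQ, if_true, if_false, mul_one, one_mul]
  · exact (gauss_integrable_pow 2).congr (Filter.Eventually.of_forall fun y => by ring)
  · exact (gauss_integrable_pow 1).congr (Filter.Eventually.of_forall fun y => by ring)
  · exact (gauss_integrable_pow 1).congr (Filter.Eventually.of_forall fun y => by ring)
  · exact integrable_const 1

lemma gauss_integral_factor (P Q : Prop) [Decidable P] [Decidable Q] :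
    ∫ y : ℝ, (if P then y else 1) * (if Q then y else 1) ∂(gaussianReal 0 1)
      = if P then (if Q then 1 else 0) else (if Q then 0 else 1) := by
  by_cases hP : P <;> by_cases hQ : Q <;>
    simp only [if_pos, if_neg, hP, hQ, if_true, if_false, mul_one, one_mul]
  · exact gauss_sq
  · exact gauss_mean
  · exact gauss_mean
  · simp

lemma integral_pi_eval_mul {ι : Type*} [Fintype ι] [DecidableEq ι] (p q : ι) :
    ∫ x : ι → ℝ, x p * x q ∂(Measure.pi fun _ : ι => gaussianReal 0 1)
      = if p = q then 1 else 0 := by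
  letI : MeasureSpace ℝ := ⟨gaussianReal 0 1⟩
  haveI : SigmaFinite (volume : Measure ℝ) := inferInstanceAs (SigmaFinite (gaussianReal 0 1))
  have h := integral_fintype_prod_eq_prod (𝕜 := ℝ)
    (fun i (y : ℝ) => (if i = p then y else 1) * (if i = q then y else 1))
    (μ := fun _ => gaussianReal 0 1)
  have hrep : (fun x : ι → ℝ => x p * x q)
      = fun x : ι → ℝ => ∏ i, (fun i (y : ℝ) =>
          (if i = p then y else 1) * (if i = q then y else 1)) i (x i) := by
    funext x
    simp only [Finset.prod_mul_distrib]
    simp [Finset.prod_ite_eq']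
  calc (∫ x : ι → ℝ, x p * x q ∂(Measure.pi fun _ : ι => gaussianReal 0 1))
      = ∏ i, ∫ y : ℝ, (if i = p then y else 1) * (if i = q then y else 1)
          ∂(gaussianReal 0 1) := by rw [hrep]; exact h
    _ = if p = q then 1 else 0 := by
        by_cases hpq : p = q
        · subst hpq
          rw [if_pos rfl]
          refine Finset.prod_eq_one fun i _ => ?_
          rw [gauss_integral_factor]
          by_cases hip : i = p <;> simp [hip]
        · rw [if_neg hpq]
          refine Finset.prod_eq_zero (Finset.mem_univ p) ?_
          rw [gauss_integral_factor]
          simp [hpq]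

lemma gauss_integrable_if (P : Prop) [Decidable P] :
    Integrable (fun y : ℝ => if P then y else 1) (gaussianReal 0 1) := by
  by_cases hP : P
  · simp only [hP, if_true]
    exact (gauss_integrable_pow 1).congr (Filter.Eventually.of_forall fun y => by simp)
  · simp only [hP, if_false]
    exact integrable_const 1

lemma integrable_pi_eval {ι : Type*} [Fintype ι] [DecidableEq ι] (p : ι) :
    Integrable (fun x : ι → ℝ => x p)
      (Measure.pi fun _ : ι => gaussianReal 0 1) := by
  letI : MeasureSpace ℝ := ⟨gaussianReal 0 1⟩
  haveI : SigmaFinite (volume : Measure ℝ) := inferInstanceAs (SigmaFinite (gaussianReal 0 1))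
  have h : Integrable (fun x : ι → ℝ => ∏ i, (fun i (y : ℝ) =>
      if i = p then y else 1) i (x i)) :=
    Integrable.fintype_prod (𝕜 := ℝ) fun i => gauss_integrable_if (i = p)
  exact h.congr (Filter.Eventually.of_forall fun x => by simp [Finset.prod_ite_eq'])

lemma integrable_pi_eval_mul {ι : Type*} [Fintype ι] [DecidableEq ι] (p q : ι) :
    Integrable (fun x : ι → ℝ => x p * x q)
      (Measure.pi fun _ : ι => gaussianReal 0 1) := by
  letI : MeasureSpace ℝ := ⟨gaussianReal 0 1⟩
  haveI : SigmaFinite (volume : Measure ℝ) := inferInstanceAs (SigmaFinite (gaussianReal 0 1))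
  have h : Integrable (fun x : ι → ℝ => ∏ i, (fun i (y : ℝ) =>
      (if i = p then y else 1) * (if i = q then y else 1)) i (x i)) :=
    Integrable.fintype_prod (𝕜 := ℝ) fun i => gauss_integrable_factor (i = p) (i = q)
  refine h.congr (Filter.Eventually.of_forall fun x => ?_)
  simp only [Finset.prod_mul_distrib]
  simp [Finset.prod_ite_eq']

/-- coefficient of the centering map -/
noncomputable def kk (m : ℕ) (α ν : Fin m) : ℝ := (if α = ν then 1 else 0) - 1 / m

lemma centered_eq (m : ℕ) (x : Fin m × Fin m → ℝ) (α γ : Fin m) :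
    centered m x α γ = ∑ ν : Fin m, kk m α ν * x (ν, γ) := by
  simp only [centered, Matrix.of_apply, kk, sub_mul, Finset.sum_sub_distrib, ite_mul, one_mul,
    zero_mul, Finset.sum_ite_eq, Finset.mem_univ, if_true, Finset.mul_sum]

section piLemmas

variable {m : ℕ}

local notation "π" => Measure.pi fun _ : Fin m × Fin m => gaussianReal 0 1

lemma integrable_centered (α γ : Fin m) :
    Integrable (fun x : Fin m × Fin m → ℝ => centered m x α γ) π := by
  have h := integrable_finset_sum (μ := π) Finset.univ
    (fun ν _ => ((integrable_pi_eval (ι := Fin m × Fin m) (ν, γ)).const_mul (kk m α ν)))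
  exact h.congr (Filter.Eventually.of_forall fun x => (centered_eq m x α γ).symm)

lemma integrable_centered_mul (α γ β δ : Fin m) :
    Integrable (fun x : Fin m × Fin m → ℝ => centered m x α γ * centered m x β δ) π := by
  have h := integrable_finset_sum (μ := π) Finset.univ
    (fun ν (_ : ν ∈ Finset.univ) => integrable_finset_sum (μ := π) Finset.univ
      (fun ρ (_ : ρ ∈ Finset.univ) =>
        ((integrable_pi_eval_mul (ι := Fin m × Fin m) (ν, γ) (ρ, δ)).const_mul
          (kk m α ν * kk m β ρ))))
  refine h.congr (Filter.Eventually.of_forall fun x => ?_)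
  show ∑ ν : Fin m, ∑ ρ : Fin m, kk m α ν * kk m β ρ * (x (ν, γ) * x (ρ, δ))
      = centered m x α γ * centered m x β δ
  rw [centered_eq m x α γ, centered_eq m x β δ, Finset.sum_mul_sum]
  exact Finset.sum_congr rfl fun ν _ => Finset.sum_congr rfl fun ρ _ => by ring

lemma integral_centered (α γ : Fin m) :
    ∫ x : Fin m × Fin m → ℝ, centered m x α γ ∂π = 0 := by
  have : (fun x : Fin m × Fin m → ℝ => centered m x α γ)
      = fun x => ∑ ν : Fin m, kk m α ν * x (ν, γ) := funext fun x => centered_eq m x α γ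
  rw [this, integral_finset_sum _
    (fun ν _ => (integrable_pi_eval (ι := Fin m × Fin m) (ν, γ)).const_mul (kk m α ν))]
  simp [integral_const_mul, integral_pi_eval]

lemma sum_kk_mul_kk (hm : 1 ≤ m) (α β : Fin m) :
    ∑ ν : Fin m, kk m α ν * kk m β ν = (if α = β then 1 else 0) - 1 / m := by
  have hm0 : (m : ℝ) ≠ 0 := Nat.cast_ne_zero.mpr (by omega)
  simp only [kk, sub_mul, mul_sub, Finset.sum_sub_distrib, ite_mul, mul_ite, one_mul, mul_one,
    zero_mul, mul_zero, Finset.sum_ite_eq, Finset.sum_ite_eq', Finset.mem_univ, if_true,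
    Finset.sum_const, Finset.card_univ, Fintype.card_fin, nsmul_eq_mul]
  by_cases h : α = β <;> field_simp [h] <;> ring

lemma integral_centered_mul (hm : 1 ≤ m) (α γ β δ : Fin m) :
    ∫ x : Fin m × Fin m → ℝ, centered m x α γ * centered m x β δ ∂π
      = (if γ = δ then 1 else 0) * ((if α = β then 1 else 0) - 1 / m) := by
  have hrep : (fun x : Fin m × Fin m → ℝ => centered m x α γ * centered m x β δ)
      = fun x => ∑ ν : Fin m, ∑ ρ : Fin m,
          (kk m α ν * kk m β ρ) * (x (ν, γ) * x (ρ, δ)) := by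
    funext x
    rw [centered_eq m x α γ, centered_eq m x β δ, Finset.sum_mul_sum]
    exact Finset.sum_congr rfl fun ν _ => Finset.sum_congr rfl fun ρ _ => by ring
  rw [hrep, integral_finset_sum _ (fun ν _ => integrable_finset_sum _
    (fun ρ _ => ((integrable_pi_eval_mul (ι := Fin m × Fin m) (ν, γ) (ρ, δ)).const_mul
      (kk m α ν * kk m β ρ))))]
  have : ∀ ν : Fin m, ∫ x : Fin m × Fin m → ℝ, ∑ ρ : Fin m,
        (kk m α ν * kk m β ρ) * (x (ν, γ) * x (ρ, δ)) ∂π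
      = ∑ ρ : Fin m, (kk m α ν * kk m β ρ) *
          (if (ν, γ) = (ρ, δ) then (1:ℝ) else 0) := by
    intro ν
    rw [integral_finset_sum _ (fun ρ _ =>
      ((integrable_pi_eval_mul (ι := Fin m × Fin m) (ν, γ) (ρ, δ)).const_mul
        (kk m α ν * kk m β ρ)))]
    exact Finset.sum_congr rfl fun ρ _ => by
      rw [integral_const_mul, integral_pi_eval_mul]
  simp only [this]
  by_cases hγδ : γ = δ
  · subst hγδ
    simp only [Prod.mk.injEq, and_true, if_pos rfl, one_mul]
    rw [← sum_kk_mul_kk hm α β]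
    simp only [if_true, one_mul]
    refine Finset.sum_congr rfl fun ν _ => ?_
    simp [mul_ite, Finset.sum_ite_eq]
  · simp [Prod.mk.injEq, hγδ]

end piLemmas

end Aux

theorem expectation_mixing_conjugation (n m : ℕ) (hn : 1 ≤ n) (hm : 1 ≤ m)
    (Φ : Matrix (Fin m) (Fin m) ℝ) (γ δ : Fin m) :
    (∫ W : Fin m × Fin m → ℝ,
        (((1 : Matrix (Fin m) (Fin m) ℝ) +
            (Real.sqrt ((n : ℝ) * m))⁻¹ • centered m W)ᵀ * Φ *
          ((1 : Matrix (Fin m) (Fin m) ℝ) +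
            (Real.sqrt ((n : ℝ) * m))⁻¹ • centered m W)) γ δ
        ∂(Measure.pi fun _ : Fin m × Fin m => gaussianReal 0 1)) =
      Φ γ δ + (1 / (n : ℝ)) *
        ((1 / (m : ℝ)) * Φ.trace -
          (1 / (m : ℝ) ^ 2) * ∑ α : Fin m, ∑ β : Fin m, Φ α β) *
        (if γ = δ then (1 : ℝ) else 0) := by
  have hm0 : (m : ℝ) ≠ 0 := Nat.cast_ne_zero.mpr (by omega)
  have hn0 : (n : ℝ) ≠ 0 := Nat.cast_ne_zero.mpr (by omega)
  set Pm : Measure (Fin m × Fin m → ℝ) := Measure.pi fun _ : Fin m × Fin m => gaussianReal 0 1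
    with hPm
  set c : ℝ := (Real.sqrt ((n : ℝ) * m))⁻¹ with hc
  have hc2 : c ^ 2 = ((n : ℝ) * m)⁻¹ := by
    rw [hc, inv_pow, Real.sq_sqrt (by positivity)]
  -- pointwise expansion of the matrix entry
  have hentry : ∀ x : Fin m × Fin m → ℝ,
      (((1 : Matrix (Fin m) (Fin m) ℝ) + c • centered m x)ᵀ * Φ *
        ((1 : Matrix (Fin m) (Fin m) ℝ) + c • centered m x)) γ δ
      = ∑ j : Fin m, ∑ i : Fin m,
          ((if i = γ then (1:ℝ) else 0) + c * centered m x i γ) * Φ i j *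
          ((if j = δ then (1:ℝ) else 0) + c * centered m x j δ) := by
    intro x
    simp only [Matrix.mul_apply, Matrix.transpose_apply, Matrix.add_apply, Matrix.one_apply,
      Matrix.smul_apply, smul_eq_mul, Finset.sum_mul]
  -- pointwise split of each summand into four parts
  have hsplit : ∀ (i j : Fin m) (x : Fin m × Fin m → ℝ),
      ((if i = γ then (1:ℝ) else 0) + c * centered m x i γ) * Φ i j *
        ((if j = δ then (1:ℝ) else 0) + c * centered m x j δ)
      = ((if i = γ then (1:ℝ) else 0) * Φ i j * (if j = δ then (1:ℝ) else 0)
          + ((if i = γ then (1:ℝ) else 0) * Φ i j * c) * centered m x j δ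
          + (Φ i j * (if j = δ then (1:ℝ) else 0) * c) * centered m x i γ)
          + (Φ i j * c ^ 2) * (centered m x i γ * centered m x j δ) := by
    intro i j x
    ring
  have hint : ∀ i j : Fin m, Integrable (fun x : Fin m × Fin m → ℝ =>
      ((if i = γ then (1:ℝ) else 0) + c * centered m x i γ) * Φ i j *
        ((if j = δ then (1:ℝ) else 0) + c * centered m x j δ)) Pm := by
    intro i j
    have h : Integrable (fun x : Fin m × Fin m → ℝ =>
        ((if i = γ then (1:ℝ) else 0) * Φ i j * (if j = δ then (1:ℝ) else 0)
          + ((if i = γ then (1:ℝ) else 0) * Φ i j * c) * centered m x j δ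
          + (Φ i j * (if j = δ then (1:ℝ) else 0) * c) * centered m x i γ)
          + (Φ i j * c ^ 2) * (centered m x i γ * centered m x j δ)) Pm :=
      (((integrable_const _).add ((integrable_centered j δ).const_mul _)).add
        ((integrable_centered i γ).const_mul _)).add
        ((integrable_centered_mul i γ j δ).const_mul _)
    exact h.congr (Filter.Eventually.of_forall fun x => (hsplit i j x).symm)
  have key : ∀ i j : Fin m,
      (∫ x : Fin m × Fin m → ℝ,
        ((if i = γ then (1:ℝ) else 0) + c * centered m x i γ) * Φ i j *
          ((if j = δ then (1:ℝ) else 0) + c * centered m x j δ) ∂Pm)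
      = (if i = γ then (1:ℝ) else 0) * Φ i j * (if j = δ then (1:ℝ) else 0)
        + (Φ i j * c ^ 2) * ((if γ = δ then (1:ℝ) else 0) *
            ((if i = j then (1:ℝ) else 0) - 1 / m)) := by
    intro i j
    rw [integral_congr_ae (Filter.Eventually.of_forall (hsplit i j))]
    have h1 : Integrable (fun _ : Fin m × Fin m → ℝ =>
        (if i = γ then (1:ℝ) else 0) * Φ i j * (if j = δ then (1:ℝ) else 0)) Pm :=
      integrable_const _
    have h2 : Integrable (fun x : Fin m × Fin m → ℝ =>
        ((if i = γ then (1:ℝ) else 0) * Φ i j * c) * centered m x j δ) Pm :=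
      (integrable_centered j δ).const_mul _
    have h3 : Integrable (fun x : Fin m × Fin m → ℝ =>
        (Φ i j * (if j = δ then (1:ℝ) else 0) * c) * centered m x i γ) Pm :=
      (integrable_centered i γ).const_mul _
    have h4 : Integrable (fun x : Fin m × Fin m → ℝ =>
        (Φ i j * c ^ 2) * (centered m x i γ * centered m x j δ)) Pm :=
      (integrable_centered_mul i γ j δ).const_mul _
    have e4 := integral_add ((h1.add h2).add h3) h4
    simp only [Pi.add_apply] at e4
    have e3 := integral_add (h1.add h2) h3
    simp only [Pi.add_apply] at e3
    have e2 := integral_add h1 h2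
    rw [e4, e3, e2, integral_const, integral_const_mul, integral_const_mul,
      integral_const_mul, integral_centered, integral_centered,
      integral_centered_mul hm]
    simp [measure_univ]
  -- put everything together
  rw [integral_congr_ae (Filter.Eventually.of_forall hentry)]
  rw [integral_finset_sum _ (fun j _ => integrable_finset_sum _ (fun i _ => hint i j))]
  have : ∀ j : Fin m, (∫ x : Fin m × Fin m → ℝ, ∑ i : Fin m,
      ((if i = γ then (1:ℝ) else 0) + c * centered m x i γ) * Φ i j *
        ((if j = δ then (1:ℝ) else 0) + c * centered m x j δ) ∂Pm)
      = ∑ i : Fin m, ((if i = γ then (1:ℝ) else 0) * Φ i j * (if j = δ then (1:ℝ) else 0)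
        + (Φ i j * c ^ 2) * ((if γ = δ then (1:ℝ) else 0) *
            ((if i = j then (1:ℝ) else 0) - 1 / m))) := by
    intro j
    rw [integral_finset_sum _ (fun i _ => hint i j)]
    exact Finset.sum_congr rfl fun i _ => key i j
  simp only [this]
  -- now pure algebra with finite sums
  simp only [Finset.sum_add_distrib]
  have hpart1 : ∑ j : Fin m, ∑ i : Fin m,
      (if i = γ then (1:ℝ) else 0) * Φ i j * (if j = δ then (1:ℝ) else 0) = Φ γ δ := by
    simp [ite_mul, mul_ite, Finset.sum_ite_eq', Finset.sum_ite_eq]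
  rw [hpart1]
  by_cases hγδ : γ = δ
  · subst hγδ
    simp only [eq_self_iff_true, if_true, one_mul, mul_one]
    have hpart2 : ∑ j : Fin m, ∑ i : Fin m,
        (Φ i j * c ^ 2) * ((if i = j then (1:ℝ) else 0) - 1 / m)
        = c ^ 2 * ((∑ j : Fin m, Φ j j) - (1/m) * ∑ j : Fin m, ∑ i : Fin m, Φ i j) := by
      have : ∀ j i : Fin m, (Φ i j * c ^ 2) * ((if i = j then (1:ℝ) else 0) - 1 / m)
          = c ^ 2 * (if i = j then Φ i j else 0) - c ^ 2 * ((1/m) * Φ i j) := by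
        intro j i
        by_cases h : i = j <;> simp [h] <;> ring
      simp only [this, Finset.sum_sub_distrib, Finset.sum_ite_eq', Finset.mem_univ, if_true,
        ← Finset.mul_sum]
      ring
    rw [hpart2]
    have htr : Φ.trace = ∑ j : Fin m, Φ j j := by
      simp [Matrix.trace, Matrix.diag]
    have hsc : ∑ j : Fin m, ∑ i : Fin m, Φ i j = ∑ α : Fin m, ∑ β : Fin m, Φ α β :=
      Finset.sum_comm
    rw [htr, hsc, hc2]
    field_simp
  · simp [hγδ]
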